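/- (Fixed-support barycenter via unbalanced multi-marginal GW, two-marginal case.) Let X₁, X₂ be compact mm-spaces, (S,d) a compact metric space, and ρ₁, ρ₂ ≥ 0 with ρ₁ + ρ₂ = 1. Let π* minimize ∬ [ρ₁|d₁(x₁,x₁') − d(s,s')|² + ρ₂|d₂(x₂,x₂') − d(s,s')|²] dπ dπ over probability measures π on X₁ × X₂ × S whose (X₁,X₂)-marginal lies in Π(μ₁,μ₂) (last marginal free). Then σ* = (P_S)_# π* minimizes σ ↦ ρ₁ GW((S,d,σ), X₁)² + ρ₂ GW((S,d,σ), X₂)² over σ ∈ P(S). -/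

import Mathlib

open MeasureTheory Filter Topology

/-- The Gromov–Wasserstein cost of a plan `π` on `X × Y`. -/
noncomputable def gwCost {X Y : Type*} [PseudoMetricSpace X] [PseudoMetricSpace Y]
    [MeasurableSpace X] [MeasurableSpace Y] (π : Measure (X × Y)) : ℝ :=
  ∫ p, ∫ q, (dist p.1 q.1 - dist p.2 q.2) ^ 2 ∂π ∂π

/-- `π` is a coupling of `μ` and `ν`. -/
def IsCoupling {X Y : Type*} [MeasurableSpace X] [MeasurableSpace Y]
    (π : Measure (X × Y)) (μ : Measure X) (ν : Measure Y) : Prop :=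
  π.map Prod.fst = μ ∧ π.map Prod.snd = ν

/-- The squared Gromov–Wasserstein distance. -/
noncomputable def gwSq {X Y : Type*} [PseudoMetricSpace X] [PseudoMetricSpace Y]
    [MeasurableSpace X] [MeasurableSpace Y] (μ : Measure X) (ν : Measure Y) : ℝ :=
  sInf {c | ∃ π : Measure (X × Y), IsCoupling π μ ν ∧ c = gwCost π}

/-- `π` is an optimal Gromov–Wasserstein plan between `μ` and `ν`. -/
def IsOptGW {X Y : Type*} [PseudoMetricSpace X] [PseudoMetricSpace Y]
    [MeasurableSpace X] [MeasurableSpace Y]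
    (π : Measure (X × Y)) (μ : Measure X) (ν : Measure Y) : Prop :=
  IsCoupling π μ ν ∧ gwCost π = gwSq μ ν

/-- The LGW objective of a three-plan on `S × X × Y`:
`∬ |d_X(x,x') − d_Y(y,y')|² dπ dπ`. -/
noncomputable def lgwCost {S X Y : Type*} [PseudoMetricSpace X] [PseudoMetricSpace Y]
    [MeasurableSpace S] [MeasurableSpace X] [MeasurableSpace Y]
    (π : Measure (S × X × Y)) : ℝ :=
  ∫ p, ∫ q, (dist p.2.1 q.2.1 - dist p.2.2 q.2.2) ^ 2 ∂π ∂π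

/-- The linear Gromov–Wasserstein value with reference `(S, σ)`:
infimum of the LGW objective over three-plans whose `(S,X)`- and `(S,Y)`-marginals
are optimal GW plans. -/
noncomputable def lgw {S X Y : Type*} [PseudoMetricSpace S] [PseudoMetricSpace X]
    [PseudoMetricSpace Y] [MeasurableSpace S] [MeasurableSpace X] [MeasurableSpace Y]
    (σ : Measure S) (μ : Measure X) (ν : Measure Y) : ℝ :=
  sInf {c | ∃ π : Measure (S × X × Y),
    IsOptGW (π.map (fun p => (p.1, p.2.1))) σ μ ∧
    IsOptGW (π.map (fun p => (p.1, p.2.2))) σ ν ∧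
    c = lgwCost π}

open MeasureTheory Filter Topology ProbabilityTheory

section Helpers

/-- Continuous real functions on compact metric spaces are integrable. -/
private lemma contIntegrable {α : Type*} [MetricSpace α] [CompactSpace α] [MeasurableSpace α]
    [BorelSpace α] (μ : Measure α) [IsFiniteMeasure μ] {f : α → ℝ} (hf : Continuous f) :
    Integrable f μ := by
  simpa [Measure.restrict_univ] using hf.continuousOn.integrableOn_compact (μ := μ) isCompact_univ

private lemma exists_bound {α : Type*} [TopologicalSpace α] [CompactSpace α] {f : α → ℝ}
    (hf : Continuous f) : ∃ C : ℝ, ∀ z, |f z| ≤ C := by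
  obtain ⟨C, hC⟩ := (isCompact_range hf.norm).bddAbove
  exact ⟨C, fun z => hC (Set.mem_range_self z)⟩

/-- Integrability of the inner integral of a continuous function. -/
private lemma integrable_inner {Z : Type*} [MetricSpace Z] [CompactSpace Z] [MeasurableSpace Z]
    [BorelSpace Z] (π : Measure Z) [IsProbabilityMeasure π] {h : Z × Z → ℝ}
    (hh : Continuous h) : Integrable (fun p => ∫ q, h (p, q) ∂π) π := by
  obtain ⟨C, hC⟩ := exists_bound hh
  refine Integrable.mono' (integrable_const C)
    (hh.stronglyMeasurable.integral_prod_right').aestronglyMeasurable (ae_of_all _ fun p => ?_)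
  calc ‖∫ q, h (p, q) ∂π‖ ≤ C * (π Set.univ).toReal :=
        norm_integral_le_of_norm_le_const (ae_of_all _ fun q => hC (p, q))
    _ = C := by simp

private lemma gwCost_nonneg {X Y : Type*} [PseudoMetricSpace X] [PseudoMetricSpace Y]
    [MeasurableSpace X] [MeasurableSpace Y] (π : Measure (X × Y)) : 0 ≤ gwCost π :=
  integral_nonneg fun _ => integral_nonneg fun _ => sq_nonneg _

private lemma gwSq_bddBelow {X Y : Type*} [PseudoMetricSpace X] [PseudoMetricSpace Y]
    [MeasurableSpace X] [MeasurableSpace Y] (μ : Measure X) (ν : Measure Y) :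
    BddBelow {c | ∃ π : Measure (X × Y), IsCoupling π μ ν ∧ c = gwCost π} := by
  refine ⟨0, fun c hc => ?_⟩
  obtain ⟨π, _, rfl⟩ := hc
  exact gwCost_nonneg π

private lemma gwSq_le {X Y : Type*} [PseudoMetricSpace X] [PseudoMetricSpace Y]
    [MeasurableSpace X] [MeasurableSpace Y] {μ : Measure X} {ν : Measure Y}
    {π : Measure (X × Y)} (h : IsCoupling π μ ν) : gwSq μ ν ≤ gwCost π :=
  csInf_le (gwSq_bddBelow μ ν) ⟨π, h, rfl⟩

private lemma exists_coupling_lt {X Y : Type*} [PseudoMetricSpace X] [PseudoMetricSpace Y]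
    [MeasurableSpace X] [MeasurableSpace Y] (μ : Measure X) (ν : Measure Y)
    [IsProbabilityMeasure μ] [IsProbabilityMeasure ν] {ε : ℝ} (hε : 0 < ε) :
    ∃ π : Measure (X × Y), IsCoupling π μ ν ∧ gwCost π < gwSq μ ν + ε := by
  have hne : {c | ∃ π : Measure (X × Y), IsCoupling π μ ν ∧ c = gwCost π}.Nonempty :=
    ⟨gwCost (μ.prod ν), μ.prod ν, ⟨Measure.fst_prod, Measure.snd_prod⟩, rfl⟩
  obtain ⟨c, ⟨π, hπ, rfl⟩, hlt⟩ := exists_lt_of_csInf_lt hne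
    (lt_add_of_pos_right (sInf _) hε)
  exact ⟨π, hπ, hlt⟩

end Helpers
section ObjEq

variable {X₁ X₂ S : Type*}
    [MetricSpace X₁] [CompactSpace X₁] [MeasurableSpace X₁] [BorelSpace X₁]
    [MetricSpace X₂] [CompactSpace X₂] [MeasurableSpace X₂] [BorelSpace X₂]
    [MetricSpace S] [CompactSpace S] [MeasurableSpace S] [BorelSpace S]

private lemma gwCost_map₁ (π : Measure (X₁ × X₂ × S)) [IsProbabilityMeasure π] :
    gwCost (π.map (fun p => (p.2.2, p.1))) =
      ∫ p, ∫ q, (dist p.1 q.1 - dist p.2.2 q.2.2) ^ 2 ∂π ∂π := by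
  have hφ : Measurable (fun p : X₁ × X₂ × S => (p.2.2, p.1)) := by fun_prop
  have hcont : Continuous (fun z : (S × X₁) × (S × X₁) =>
      (dist z.1.1 z.2.1 - dist z.1.2 z.2.2) ^ 2) := by fun_prop
  rw [gwCost, integral_map hφ.aemeasurable
    hcont.stronglyMeasurable.integral_prod_right'.aestronglyMeasurable]
  refine integral_congr_ae (ae_of_all _ fun p => ?_)
  beta_reduce
  rw [integral_map hφ.aemeasurable (by fun_prop : Continuous fun q : S × X₁ =>
    (dist (p.2.2, p.1).1 q.1 - dist (p.2.2, p.1).2 q.2) ^ 2).aestronglyMeasurable]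
  exact integral_congr_ae (ae_of_all _ fun q => by ring)

private lemma gwCost_map₂ (π : Measure (X₁ × X₂ × S)) [IsProbabilityMeasure π] :
    gwCost (π.map (fun p => (p.2.2, p.2.1))) =
      ∫ p, ∫ q, (dist p.2.1 q.2.1 - dist p.2.2 q.2.2) ^ 2 ∂π ∂π := by
  have hφ : Measurable (fun p : X₁ × X₂ × S => (p.2.2, p.2.1)) := by fun_prop
  have hcont : Continuous (fun z : (S × X₂) × (S × X₂) =>
      (dist z.1.1 z.2.1 - dist z.1.2 z.2.2) ^ 2) := by fun_prop
  rw [gwCost, integral_map hφ.aemeasurable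
    hcont.stronglyMeasurable.integral_prod_right'.aestronglyMeasurable]
  refine integral_congr_ae (ae_of_all _ fun p => ?_)
  beta_reduce
  rw [integral_map hφ.aemeasurable (by fun_prop : Continuous fun q : S × X₂ =>
    (dist (p.2.2, p.2.1).1 q.1 - dist (p.2.2, p.2.1).2 q.2) ^ 2).aestronglyMeasurable]
  exact integral_congr_ae (ae_of_all _ fun q => by ring)

/-- The two-marginal objective splits as a weighted sum of GW costs of the marginals. -/
private lemma obj_eq (π : Measure (X₁ × X₂ × S)) [IsProbabilityMeasure π] (ρ₁ ρ₂ : ℝ) :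
    (∫ p, ∫ q, (ρ₁ * (dist p.1 q.1 - dist p.2.2 q.2.2) ^ 2
        + ρ₂ * (dist p.2.1 q.2.1 - dist p.2.2 q.2.2) ^ 2) ∂π ∂π)
    = ρ₁ * gwCost (π.map (fun p => (p.2.2, p.1)))
      + ρ₂ * gwCost (π.map (fun p => (p.2.2, p.2.1))) := by
  rw [gwCost_map₁, gwCost_map₂]
  have hA : Continuous (fun z : (X₁ × X₂ × S) × (X₁ × X₂ × S) =>
      (dist z.1.1 z.2.1 - dist z.1.2.2 z.2.2.2) ^ 2) := by fun_prop
  have hB : Continuous (fun z : (X₁ × X₂ × S) × (X₁ × X₂ × S) =>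
      (dist z.1.2.1 z.2.2.1 - dist z.1.2.2 z.2.2.2) ^ 2) := by fun_prop
  have hinner : ∀ p : X₁ × X₂ × S,
      (∫ q, (ρ₁ * (dist p.1 q.1 - dist p.2.2 q.2.2) ^ 2
        + ρ₂ * (dist p.2.1 q.2.1 - dist p.2.2 q.2.2) ^ 2) ∂π)
      = ρ₁ * (∫ q, (dist p.1 q.1 - dist p.2.2 q.2.2) ^ 2 ∂π)
        + ρ₂ * (∫ q, (dist p.2.1 q.2.1 - dist p.2.2 q.2.2) ^ 2 ∂π) := by
    intro p
    rw [← integral_const_mul _ _, ← integral_const_mul _ _, ← integral_add]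
    · exact (contIntegrable π (by fun_prop)).const_mul ρ₁
    · exact (contIntegrable π (by fun_prop)).const_mul ρ₂
  rw [integral_congr_ae (ae_of_all _ hinner), integral_add
      ((integrable_inner π hA).const_mul ρ₁) ((integrable_inner π hB).const_mul ρ₂),
    integral_const_mul _ _, integral_const_mul _ _]

end ObjEq
section Glue

variable {X₁ X₂ S : Type*}
    [MetricSpace X₁] [CompactSpace X₁] [MeasurableSpace X₁] [BorelSpace X₁]
    [MetricSpace X₂] [CompactSpace X₂] [MeasurableSpace X₂] [BorelSpace X₂]
    [MetricSpace S] [CompactSpace S] [MeasurableSpace S] [BorelSpace S]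

private lemma nonempty_of_prob {α : Type*} [MeasurableSpace α] (μ : Measure α)
    [IsProbabilityMeasure μ] : Nonempty α := by
  by_contra h
  rw [not_nonempty_iff] at h
  have h1 : μ Set.univ = 1 := measure_univ
  rw [Set.univ_eq_empty_iff.mpr h, measure_empty] at h1
  exact zero_ne_one h1

/-- Gluing two couplings with common first marginal into a three-plan. -/
private lemma glue (σ : Measure S) (μ₁ : Measure X₁) (μ₂ : Measure X₂)
    [IsProbabilityMeasure σ] [IsProbabilityMeasure μ₁] [IsProbabilityMeasure μ₂]
    (γ₁ : Measure (S × X₁)) (γ₂ : Measure (S × X₂))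
    (h₁ : IsCoupling γ₁ σ μ₁) (h₂ : IsCoupling γ₂ σ μ₂) :
    ∃ π : Measure (X₁ × X₂ × S), IsProbabilityMeasure π ∧
      IsCoupling (π.map (fun p => (p.1, p.2.1))) μ₁ μ₂ ∧
      π.map (fun p => (p.2.2, p.1)) = γ₁ ∧
      π.map (fun p => (p.2.2, p.2.1)) = γ₂ := by
  haveI : Nonempty X₁ := nonempty_of_prob μ₁
  haveI : Nonempty X₂ := nonempty_of_prob μ₂
  haveI hpγ₁ : IsProbabilityMeasure γ₁ := by
    constructor
    have := congrArg (fun m : Measure S => m Set.univ) h₁.1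
    simpa [Measure.map_apply measurable_fst MeasurableSet.univ] using this
  haveI hpγ₂ : IsProbabilityMeasure γ₂ := by
    constructor
    have := congrArg (fun m : Measure S => m Set.univ) h₂.1
    simpa [Measure.map_apply measurable_fst MeasurableSet.univ] using this
  set κ₁ := γ₁.condKernel with hκ₁
  set κ₂ := γ₂.condKernel with hκ₂
  set ν : Measure (S × X₁ × X₂) := σ ⊗ₘ (κ₁ ×ₖ κ₂) with hν
  have hd₁ : σ ⊗ₘ κ₁ = γ₁ := by
    conv_lhs => rw [← h₁.1]
    exact γ₁.disintegrate γ₁.condKernel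
  have hd₂ : σ ⊗ₘ κ₂ = γ₂ := by
    conv_lhs => rw [← h₂.1]
    exact γ₂.disintegrate γ₂.condKernel
  have key₁ : ν.map (fun p => (p.1, p.2.1)) = γ₁ := by
    rw [← hd₁]
    ext t ht
    rw [Measure.map_apply (by fun_prop) ht,
      Measure.compProd_apply (ht.preimage (by fun_prop)), Measure.compProd_apply ht]
    refine lintegral_congr fun s => ?_
    have hmk : MeasurableSet (Prod.mk s ⁻¹' t) := measurable_prodMk_left ht
    calc (κ₁ ×ₖ κ₂) s (Prod.mk s ⁻¹' ((fun p : S × X₁ × X₂ => (p.1, p.2.1)) ⁻¹' t))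
        = ((κ₁ ×ₖ κ₂).fst s) (Prod.mk s ⁻¹' t) := (Kernel.fst_apply' _ _ hmk).symm
      _ = κ₁ s (Prod.mk s ⁻¹' t) := by rw [Kernel.fst_prod]
  have key₂ : ν.map (fun p => (p.1, p.2.2)) = γ₂ := by
    rw [← hd₂]
    ext t ht
    rw [Measure.map_apply (by fun_prop) ht,
      Measure.compProd_apply (ht.preimage (by fun_prop)), Measure.compProd_apply ht]
    refine lintegral_congr fun s => ?_
    have hmk : MeasurableSet (Prod.mk s ⁻¹' t) := measurable_prodMk_left ht
    calc (κ₁ ×ₖ κ₂) s (Prod.mk s ⁻¹' ((fun p : S × X₁ × X₂ => (p.1, p.2.2)) ⁻¹' t))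
        = ((κ₁ ×ₖ κ₂).snd s) (Prod.mk s ⁻¹' t) := (Kernel.snd_apply' _ _ hmk).symm
      _ = κ₂ s (Prod.mk s ⁻¹' t) := by rw [Kernel.snd_prod]
  refine ⟨ν.map (fun p => (p.2.1, p.2.2, p.1)), Measure.isProbabilityMeasure_map (by fun_prop), ?_, ?_, ?_⟩
  · constructor
    · rw [Measure.map_map measurable_fst (by fun_prop),
        Measure.map_map (by fun_prop) (by fun_prop)]
      have : ((Prod.fst ∘ fun p : X₁ × X₂ × S => (p.1, p.2.1)) ∘
          (fun p : S × X₁ × X₂ => (p.2.1, p.2.2, p.1)))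
          = (Prod.snd ∘ fun p : S × X₁ × X₂ => (p.1, p.2.1)) := rfl
      rw [this, ← Measure.map_map measurable_snd (by fun_prop), key₁, h₁.2]
    · rw [Measure.map_map measurable_snd (by fun_prop),
        Measure.map_map (by fun_prop) (by fun_prop)]
      have : ((Prod.snd ∘ fun p : X₁ × X₂ × S => (p.1, p.2.1)) ∘
          (fun p : S × X₁ × X₂ => (p.2.1, p.2.2, p.1)))
          = (Prod.snd ∘ fun p : S × X₁ × X₂ => (p.1, p.2.2)) := rfl
      rw [this, ← Measure.map_map measurable_snd (by fun_prop), key₂, h₂.2]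
  · rw [Measure.map_map (by fun_prop) (by fun_prop)]
    exact key₁
  · rw [Measure.map_map (by fun_prop) (by fun_prop)]
    exact key₂

end Glue

/-- fixed-support GW barycenter via unbalanced multi-marginal GW
(two-marginal case): the `S`-marginal of a minimizer of the three-plan problem minimizes
the fixed-support barycenter objective. -/
theorem fixed_support_barycenter
    {X₁ X₂ S : Type*}
    [MetricSpace X₁] [CompactSpace X₁] [MeasurableSpace X₁] [BorelSpace X₁]
    [MetricSpace X₂] [CompactSpace X₂] [MeasurableSpace X₂] [BorelSpace X₂]
    [MetricSpace S] [CompactSpace S] [MeasurableSpace S] [BorelSpace S]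
    (μ₁ : Measure X₁) (μ₂ : Measure X₂)
    [IsProbabilityMeasure μ₁] [IsProbabilityMeasure μ₂]
    (ρ₁ ρ₂ : ℝ) (h₁ : 0 ≤ ρ₁) (h₂ : 0 ≤ ρ₂) (hsum : ρ₁ + ρ₂ = 1)
    (πstar : Measure (X₁ × X₂ × S)) [IsProbabilityMeasure πstar]
    (hmarg : IsCoupling (πstar.map (fun p => (p.1, p.2.1))) μ₁ μ₂)
    (hopt : ∀ π : Measure (X₁ × X₂ × S), IsProbabilityMeasure π →
      IsCoupling (π.map (fun p => (p.1, p.2.1))) μ₁ μ₂ →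
      (∫ p, ∫ q, (ρ₁ * (dist p.1 q.1 - dist p.2.2 q.2.2) ^ 2
          + ρ₂ * (dist p.2.1 q.2.1 - dist p.2.2 q.2.2) ^ 2) ∂πstar ∂πstar) ≤
      (∫ p, ∫ q, (ρ₁ * (dist p.1 q.1 - dist p.2.2 q.2.2) ^ 2
          + ρ₂ * (dist p.2.1 q.2.1 - dist p.2.2 q.2.2) ^ 2) ∂π ∂π)) :
    ∀ σ : Measure S, IsProbabilityMeasure σ →
      ρ₁ * gwSq (πstar.map (fun p => p.2.2)) μ₁ + ρ₂ * gwSq (πstar.map (fun p => p.2.2)) μ₂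
        ≤ ρ₁ * gwSq σ μ₁ + ρ₂ * gwSq σ μ₂ := by
  intro σ hσ
  haveI := hσ
  haveI : IsProbabilityMeasure (πstar.map (fun p : X₁ × X₂ × S => p.2.2)) :=
    Measure.isProbabilityMeasure_map (by fun_prop)
  have hm1 : πstar.map (fun p : X₁ × X₂ × S => p.1) = μ₁ := by
    have := hmarg.1
    rwa [Measure.map_map measurable_fst (by fun_prop)] at this
  have hm2 : πstar.map (fun p : X₁ × X₂ × S => p.2.1) = μ₂ := by
    have := hmarg.2
    rwa [Measure.map_map measurable_snd (by fun_prop)] at this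
  have hc1 : IsCoupling (πstar.map (fun p : X₁ × X₂ × S => (p.2.2, p.1)))
      (πstar.map (fun p => p.2.2)) μ₁ := by
    constructor
    · rw [Measure.map_map measurable_fst (by fun_prop)]
      rfl
    · rw [Measure.map_map measurable_snd (by fun_prop)]
      exact hm1
  have hc2 : IsCoupling (πstar.map (fun p : X₁ × X₂ × S => (p.2.2, p.2.1)))
      (πstar.map (fun p => p.2.2)) μ₂ := by
    constructor
    · rw [Measure.map_map measurable_fst (by fun_prop)]
      rfl
    · rw [Measure.map_map measurable_snd (by fun_prop)]
      exact hm2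
  have stepA : ρ₁ * gwSq (πstar.map (fun p => p.2.2)) μ₁
      + ρ₂ * gwSq (πstar.map (fun p => p.2.2)) μ₂
      ≤ (∫ p, ∫ q, (ρ₁ * (dist p.1 q.1 - dist p.2.2 q.2.2) ^ 2
          + ρ₂ * (dist p.2.1 q.2.1 - dist p.2.2 q.2.2) ^ 2) ∂πstar ∂πstar) := by
    rw [obj_eq πstar ρ₁ ρ₂]
    exact add_le_add (mul_le_mul_of_nonneg_left (gwSq_le hc1) h₁)
      (mul_le_mul_of_nonneg_left (gwSq_le hc2) h₂)
  refine le_of_forall_pos_le_add fun ε hε => ?_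
  obtain ⟨γ₁, hγ₁, hγ₁lt⟩ := exists_coupling_lt σ μ₁ hε
  obtain ⟨γ₂, hγ₂, hγ₂lt⟩ := exists_coupling_lt σ μ₂ hε
  obtain ⟨π, hπp, hπc, hπ1, hπ2⟩ := glue σ μ₁ μ₂ γ₁ γ₂ hγ₁ hγ₂
  haveI := hπp
  calc ρ₁ * gwSq (πstar.map (fun p => p.2.2)) μ₁ + ρ₂ * gwSq (πstar.map (fun p => p.2.2)) μ₂
      ≤ (∫ p, ∫ q, (ρ₁ * (dist p.1 q.1 - dist p.2.2 q.2.2) ^ 2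
          + ρ₂ * (dist p.2.1 q.2.1 - dist p.2.2 q.2.2) ^ 2) ∂πstar ∂πstar) := stepA
    _ ≤ (∫ p, ∫ q, (ρ₁ * (dist p.1 q.1 - dist p.2.2 q.2.2) ^ 2
          + ρ₂ * (dist p.2.1 q.2.1 - dist p.2.2 q.2.2) ^ 2) ∂π ∂π) := hopt π hπp hπc
    _ = ρ₁ * gwCost γ₁ + ρ₂ * gwCost γ₂ := by rw [obj_eq π ρ₁ ρ₂, hπ1, hπ2]
    _ ≤ ρ₁ * (gwSq σ μ₁ + ε) + ρ₂ * (gwSq σ μ₂ + ε) :=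
        add_le_add (mul_le_mul_of_nonneg_left hγ₁lt.le h₁)
          (mul_le_mul_of_nonneg_left hγ₂lt.le h₂)
    _ = ρ₁ * gwSq σ μ₁ + ρ₂ * gwSq σ μ₂ + ε := by linear_combination ε * hsum
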